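/- Let s ≥ 1 and let u, u' ∈ Σ_2^n (binary sequences of length n) with d = d_H(u, u') satisfying 1 ≤ d ≤ 2s. Then |B^S_s(u) ∩ B^S_s(u')| = ξ^{2,n}_{d,s}, where ξ^{2,n}_{d,s} = Σ_{i=0}^{d} binom(d,i) · Σ_{k=0}^{s−d+min{i, d−i}} binom(n−d, k) if 1 ≤ d ≤ s, and ξ^{2,n}_{d,s} = Σ_{i=d−s}^{s} binom(d,i) · Σ_{k=0}^{s−d+min{i, d−i}} binom(n−d, k) if s < d ≤ 2s; here any inner sum whose upper limit is negative is understood to be 0. -/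

import Mathlib

open Finset in
/-- Counting subsets of bounded size. -/
private lemma stmt3_pow_le_card {α : Type*} [DecidableEq α] (X : Finset α) (m : ℕ) :
    (X.powerset.filter fun B => B.card ≤ m).card = ∑ k ∈ range (m + 1), (X.card).choose k := by
  rw [card_eq_sum_card_fiberwise (f := Finset.card) (t := range (m + 1))
    (fun B hB => by simp only [mem_coe, mem_filter] at hB; simpa using Nat.lt_succ_of_le hB.2)]
  refine Finset.sum_congr rfl fun k hk => ?_
  rw [← card_powersetCard, powersetCard_eq_filter]
  congr 1
  ext B
  simp only [mem_filter, mem_powerset]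
  constructor
  · rintro ⟨⟨h1, h2⟩, h3⟩; exact ⟨h1, h3⟩
  · rintro ⟨h1, h3⟩; exact ⟨⟨h1, h3 ▸ Nat.lt_succ_iff.mp (mem_range.mp hk)⟩, h3⟩

open Finset in
/-- Exact size of the intersection of two `s`-substitution balls of binary sequences of
length `n` at Hamming distance `d` with `1 ≤ d ≤ 2s`.  The inner upper limit
`s − d + min{i, d−i}` is written as `s + min i (d - i) - d`, which (for the `i` in the
stated ranges) is a nonnegative quantity, so truncated subtraction agrees with the
intended value; sums with negative upper limit are empty by convention. -/
theorem stmt3 (n s : ℕ) (hs : 1 ≤ s) (u u' : Fin n → Fin 2)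
    (d : ℕ) (hd : hammingDist u u' = d) (hd1 : 1 ≤ d) (hd2 : d ≤ 2 * s) :
    {v : Fin n → Fin 2 | hammingDist v u ≤ s ∧ hammingDist v u' ≤ s}.ncard
      = if d ≤ s then
          ∑ i ∈ Finset.range (d + 1), Nat.choose d i *
            ∑ k ∈ Finset.range (s + min i (d - i) - d + 1), Nat.choose (n - d) k
        else
          ∑ i ∈ Finset.Icc (d - s) s, Nat.choose d i *
            ∑ k ∈ Finset.range (s + min i (d - i) - d + 1), Nat.choose (n - d) k := by
  classical
  set D : Finset (Fin n) := univ.filter fun j => u j ≠ u' j with hDdef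
  have hD : D.card = d := hd
  have hDc : Dᶜ.card = n - d := by
    rw [card_compl, hD, Fintype.card_fin]
  -- the two key decompositions of Hamming distances
  have fact1 : ∀ v : Fin n → Fin 2, hammingDist v u
      = (D.filter fun j => v j ≠ u j).card + (Dᶜ.filter fun j => v j ≠ u j).card := by
    intro v
    have e : (univ.filter fun j => v j ≠ u j)
        = (D.filter fun j => v j ≠ u j) ∪ (Dᶜ.filter fun j => v j ≠ u j) := by
      rw [← filter_union, union_compl]
    show (univ.filter fun j => v j ≠ u j).card = _
    rw [e, card_union_of_disjoint (disjoint_filter_filter disjoint_compl_right)]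
  have fact2 : ∀ v : Fin n → Fin 2, hammingDist v u'
      = (d - (D.filter fun j => v j ≠ u j).card) + (Dᶜ.filter fun j => v j ≠ u j).card := by
    intro v
    have key : ∀ a b c : Fin 2, (a ≠ c ↔ (¬ a ≠ b ∧ b ≠ c) ∨ (a ≠ b ∧ ¬ b ≠ c)) := by decide
    have e : (univ.filter fun j => v j ≠ u' j)
        = (D.filter fun j => ¬ v j ≠ u j) ∪ (Dᶜ.filter fun j => v j ≠ u j) := by
      ext j
      simp only [mem_union, mem_filter, mem_compl, mem_univ, true_and, hDdef]
      have := key (v j) (u j) (u' j)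
      tauto
    have hcard : (D.filter fun j => v j ≠ u j).card + (D.filter fun j => ¬ v j ≠ u j).card = d := by
      rw [card_filter_add_card_filter_not, hD]
    show (univ.filter fun j => v j ≠ u' j).card = _
    rw [e, card_union_of_disjoint (disjoint_filter_filter disjoint_compl_right)]
    omega
  -- step A : the intersection is in bijection with pairs of subsets
  have stepA : {v : Fin n → Fin 2 | hammingDist v u ≤ s ∧ hammingDist v u' ≤ s}.ncard
      = ((D.powerset ×ˢ Dᶜ.powerset).filter fun p =>
          p.1.card + p.2.card ≤ s ∧ (d - p.1.card) + p.2.card ≤ s).card := by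
    rw [Set.ncard_eq_toFinset_card', Set.toFinset_setOf]
    have flipne : ∀ a : Fin 2, a + 1 ≠ a := by decide
    have flipeq : ∀ a b : Fin 2, a ≠ b → b + 1 = a := by decide
    have comp : ∀ A B : Finset (Fin n), A ⊆ D → B ⊆ Dᶜ →
        (D.filter fun x => (if x ∈ A ∪ B then u x + 1 else u x) ≠ u x) = A
        ∧ (Dᶜ.filter fun x => (if x ∈ A ∪ B then u x + 1 else u x) ≠ u x) = B := by
      intro A B hA hB
      have hmem : ∀ x, ((if x ∈ A ∪ B then u x + 1 else u x) ≠ u x) ↔ x ∈ A ∪ B := by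
        intro x
        by_cases hx : x ∈ A ∪ B <;> simp [hx, flipne]
      constructor
      · ext x
        rw [mem_filter, hmem x, mem_union]
        constructor
        · rintro ⟨hxD, hx | hx⟩
          · exact hx
          · exact absurd hxD (mem_compl.mp (hB hx))
        · exact fun hx => ⟨hA hx, Or.inl hx⟩
      · ext x
        rw [mem_filter, hmem x, mem_union]
        constructor
        · rintro ⟨hxD, hx | hx⟩
          · exact absurd (hA hx) (mem_compl.mp hxD)
          · exact hx
        · exact fun hx => ⟨hB hx, Or.inr hx⟩
    refine Finset.card_bij'
      (fun v _ => (D.filter fun j => v j ≠ u j, Dᶜ.filter fun j => v j ≠ u j))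
      (fun p _ => fun x => if x ∈ p.1 ∪ p.2 then u x + 1 else u x) ?_ ?_ ?_ ?_
    · intro v hv
      simp only [mem_filter, mem_univ, true_and] at hv
      simp only [mem_filter, mem_product, mem_powerset]
      exact ⟨⟨filter_subset _ _, filter_subset _ _⟩,
        by rw [← fact1 v]; exact hv.1, by rw [← fact2 v]; exact hv.2⟩
    · rintro ⟨A, B⟩ hp
      simp only [mem_filter, mem_product, mem_powerset] at hp
      obtain ⟨⟨hA, hB⟩, h1, h2⟩ := hp
      obtain ⟨c1, c2⟩ := comp A B hA hB
      simp only [mem_filter, mem_univ, true_and]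
      constructor
      · rw [fact1, c1, c2]; exact h1
      · rw [fact2, c1, c2]; exact h2
    · intro v hv
      dsimp only
      funext x
      by_cases hx : v x ≠ u x
      · have hxm : x ∈ D.filter (fun j => v j ≠ u j) ∪ Dᶜ.filter (fun j => v j ≠ u j) := by
          rw [← filter_union, union_compl]
          simp [hx]
        rw [if_pos hxm]
        exact flipeq (v x) (u x) hx
      · have hxm : x ∉ D.filter (fun j => v j ≠ u j) ∪ Dᶜ.filter (fun j => v j ≠ u j) := by
          rw [← filter_union, union_compl]
          simp [hx]
        rw [if_neg hxm]
        push_neg at hx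
        exact hx.symm
    · rintro ⟨A, B⟩ hp
      simp only [mem_filter, mem_product, mem_powerset] at hp
      obtain ⟨c1, c2⟩ := comp A B hp.1.1 hp.1.2
      exact Prod.ext c1 c2
  -- inner count
  have inner : ∀ i : ℕ, i ≤ d →
      (Dᶜ.powerset.filter fun B => i + B.card ≤ s ∧ (d - i) + B.card ≤ s).card
        = if d ≤ s + i ∧ i ≤ s then
            ∑ k ∈ range (s + min i (d - i) - d + 1), Nat.choose (n - d) k
          else 0 := by
    intro i hi
    by_cases h : d ≤ s + i ∧ i ≤ s
    · rw [if_pos h, ← hDc, ← stmt3_pow_le_card]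
      congr 1
      ext B
      simp only [mem_filter, mem_powerset]
      constructor
      · rintro ⟨h1, h2, h3⟩; exact ⟨h1, by omega⟩
      · rintro ⟨h1, h2⟩; exact ⟨h1, by omega, by omega⟩
    · rw [if_neg h, card_eq_zero, filter_eq_empty_iff]
      intro B _
      omega
  -- step B : product card as double sum
  rw [stepA, card_filter, sum_product]
  have stepB : ∀ A ∈ D.powerset,
      (∑ B ∈ Dᶜ.powerset, if A.card + B.card ≤ s ∧ (d - A.card) + B.card ≤ s then 1 else 0)
        = if d ≤ s + A.card ∧ A.card ≤ s then
            ∑ k ∈ range (s + min A.card (d - A.card) - d + 1), Nat.choose (n - d) k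
          else 0 := by
    intro A hA
    rw [← card_filter]
    exact inner A.card (by simpa [hD] using card_le_card (mem_powerset.mp hA))
  rw [Finset.sum_congr rfl stepB]
  -- step C : sum fiberwise over the cardinality
  have stepC : (∑ A ∈ D.powerset, if d ≤ s + A.card ∧ A.card ≤ s then
            ∑ k ∈ range (s + min A.card (d - A.card) - d + 1), Nat.choose (n - d) k
          else 0)
      = ∑ i ∈ range (d + 1), Nat.choose d i *
          (if d ≤ s + i ∧ i ≤ s then
            ∑ k ∈ range (s + min i (d - i) - d + 1), Nat.choose (n - d) k
          else 0) := by
    rw [← sum_fiberwise_of_maps_to (g := Finset.card) (t := range (d + 1))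
      (fun A hA => by
        simpa using Nat.lt_succ_of_le (hD ▸ card_le_card (mem_powerset.mp hA)))]
    refine Finset.sum_congr rfl fun i hi => ?_
    rw [← powersetCard_eq_filter]
    rw [Finset.sum_congr rfl (fun A hA => by rw [(mem_powersetCard.mp hA).2])]
    rw [sum_const, card_powersetCard, hD, smul_eq_mul]
  rw [stepC]
  -- step D : split according to `d ≤ s`
  by_cases hds : d ≤ s
  · rw [if_pos hds]
    refine Finset.sum_congr rfl fun i hi => ?_
    have : d ≤ s + i ∧ i ≤ s := by
      simp only [mem_range] at hi; omega
    rw [if_pos this]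
  · rw [if_neg hds]
    have hsub : Finset.Icc (d - s) s ⊆ range (d + 1) := fun i hi => by
      simp only [mem_Icc, mem_range] at hi ⊢; omega
    rw [← Finset.sum_subset hsub (fun i hi hni => by
      simp only [mem_range, mem_Icc] at hi hni
      rw [if_neg (by omega), mul_zero])]
    refine Finset.sum_congr rfl fun i hi => ?_
    simp only [mem_Icc] at hi
    rw [if_pos (by omega)]
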